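/- (Co-area formula on graphs) For a finite subset Ω of a weighted graph and a nonnegative function u on Ω extended by zero, with superlevel sets Ω_t(u) = {x ∈ Ω : u(x) > t}, one has (1/2) Σ_{x,y} |ū(x) - ū(y)| μ_{xy} = ∫₀^∞ |∂Ω_t(u)|_μ dt, and ∫₀^∞ |Ω_t(u)|_ν dt = Σ_{x∈Ω} u(x) ν_x. -/

import Mathlib

open scoped BigOperators

namespace PGraph

variable {V : Type*}

/-- The `p`-Dirichlet energy `E_p(u) = (1/2) ∑_{x,y} μ_{xy} |u(y)-u(x)|^p`. -/
noncomputable def energy (μ : V → V → ℝ) (p : ℝ) (u : V → ℝ) : ℝ :=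
  (1 / 2) * ∑ᶠ x : V, ∑ᶠ y : V, μ x y * |u y - u x| ^ p

/-- `‖u‖_{p,Ω}^p = ∑_{x∈Ω} |u(x)|^p ν_x`. -/
noncomputable def pnormP (ν : V → ℝ) (Ω : Finset V) (p : ℝ) (u : V → ℝ) : ℝ :=
  ∑ x ∈ Ω, |u x| ^ p * ν x

/-- The `p`-Laplacian `Δ_p u(x) = (1/ν_x) ∑_y μ_{xy} |u(y)-u(x)|^{p-2}(u(y)-u(x))`. -/
noncomputable def plap (μ : V → V → ℝ) (ν : V → ℝ) (p : ℝ) (u : V → ℝ) (x : V) : ℝ :=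
  (1 / ν x) * ∑ᶠ y : V, μ x y * (|u y - u x| ^ (p - 2) * (u y - u x))

/-- `u` is an eigenfunction of the Dirichlet `p`-Laplacian on `Ω` with eigenvalue `lam`:
`u` vanishes outside `Ω` (zero extension), `u ≢ 0` on `Ω`, and
`Δ_p u = -lam |u|^{p-2} u` on `Ω`. -/
def IsDirEigenfun (μ : V → V → ℝ) (ν : V → ℝ) (Ω : Finset V) (p : ℝ)
    (u : V → ℝ) (lam : ℝ) : Prop :=
  (∀ x, x ∉ Ω → u x = 0) ∧ (∃ x ∈ Ω, u x ≠ 0) ∧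
    ∀ x ∈ Ω, plap μ ν p u x = -lam * (|u x| ^ (p - 2) * u x)

/-- The first Dirichlet eigenvalue, via the Rayleigh quotient characterization. -/
noncomputable def lam1 (μ : V → V → ℝ) (ν : V → ℝ) (Ω : Finset V) (p : ℝ) : ℝ :=
  sInf {t : ℝ | ∃ u : V → ℝ, (∀ x, x ∉ Ω → u x = 0) ∧ (∃ x ∈ Ω, u x ≠ 0) ∧
    t = energy μ p u / pnormP ν Ω p u}

/-- The maximum Dirichlet eigenvalue, via the Rayleigh quotient characterization. -/
noncomputable def lamMax (μ : V → V → ℝ) (ν : V → ℝ) (Ω : Finset V) (p : ℝ) : ℝ :=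
  sSup {t : ℝ | ∃ u : V → ℝ, (∀ x, x ∉ Ω → u x = 0) ∧ (∃ x ∈ Ω, u x ≠ 0) ∧
    t = energy μ p u / pnormP ν Ω p u}

/-- The induced subgraph on `Ω` is connected. -/
def ConnOn (μ : V → V → ℝ) (Ω : Finset V) : Prop :=
  ∀ x ∈ Ω, ∀ y ∈ Ω,
    Relation.ReflTransGen (fun a b => a ∈ Ω ∧ b ∈ Ω ∧ 0 < μ a b) x y

/-- The induced subgraph on `Ω` is bipartite with parts `V₁, V₂`. -/
def BipartiteOn (μ : V → V → ℝ) (Ω : Finset V) : Prop :=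
  ∃ V₁ V₂ : Set V, (Ω : Set V) = V₁ ∪ V₂ ∧ Disjoint V₁ V₂ ∧
    ∀ x ∈ Ω, ∀ y ∈ Ω, 0 < μ x y → ((x ∈ V₁ ∧ y ∈ V₂) ∨ (x ∈ V₂ ∧ y ∈ V₁))

/-- A locally finite weighted graph: symmetric nonnegative edge weights without
self-loops, finitely many neighbours at each vertex, positive vertex weights. -/
structure IsWeightedGraph (μ : V → V → ℝ) (ν : V → ℝ) : Prop where
  symm : ∀ x y, μ x y = μ y x
  nonneg : ∀ x y, 0 ≤ μ x y
  loopless : ∀ x, μ x x = 0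
  locFin : ∀ x, (Function.support (μ x)).Finite
  nuPos : ∀ x, 0 < ν x

/-- The edge boundary measure `|∂U|_μ` of a finite vertex set `U`. -/
noncomputable def bdryWt (μ : V → V → ℝ) (U : Finset V) : ℝ :=
  ∑ x ∈ U, ∑ᶠ y ∈ {z : V | z ∉ U}, μ x y

/-- The Dirichlet Cheeger constant `h_{μ,ν}(Ω) = min_{∅ ≠ U ⊆ Ω} |∂U|_μ / |U|_ν`. -/
noncomputable def cheeger (μ : V → V → ℝ) (ν : V → ℝ) (Ω : Finset V) : ℝ :=
  sInf {t : ℝ | ∃ U : Finset V, U ⊆ Ω ∧ U.Nonempty ∧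
    t = bdryWt μ U / ∑ x ∈ U, ν x}

end PGraph

namespace PGraph

open MeasureTheory Classical

private lemma aux_integrable (a b c : ℝ) :
    MeasureTheory.Integrable ((Set.Ico a b).indicator fun _ => c)
      (MeasureTheory.volume.restrict (Set.Ioi 0)) := by
  apply MeasureTheory.Integrable.restrict
  rw [MeasureTheory.integrable_indicator_iff measurableSet_Ico]
  exact MeasureTheory.integrableOn_const
    (by rw [Real.volume_Ico]; exact ENNReal.ofReal_ne_top) enorm_ne_top

private lemma aux_integral (a b c : ℝ) (ha : 0 ≤ a) :
    ∫ t in Set.Ioi (0:ℝ), (Set.Ico a b).indicator (fun _ => c) t = max (b - a) 0 * c := by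
  rw [MeasureTheory.setIntegral_indicator measurableSet_Ico, MeasureTheory.setIntegral_const]
  have h1 : MeasureTheory.volume (Set.Ioi 0 ∩ Set.Ico a b) = ENNReal.ofReal (b - a) := by
    apply le_antisymm
    · calc MeasureTheory.volume (Set.Ioi 0 ∩ Set.Ico a b)
          ≤ MeasureTheory.volume (Set.Ico a b) := MeasureTheory.measure_mono Set.inter_subset_right
        _ = ENNReal.ofReal (b - a) := Real.volume_Ico
    · calc ENNReal.ofReal (b - a) = MeasureTheory.volume (Set.Ioo a b) := Real.volume_Ioo.symm
        _ ≤ _ := MeasureTheory.measure_mono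
            (show Set.Ioo a b ⊆ Set.Ioi 0 ∩ Set.Ico a b from
              fun t ht => ⟨lt_of_le_of_lt ha ht.1, le_of_lt ht.1, ht.2⟩)
  rw [MeasureTheory.measureReal_def, h1, ENNReal.toReal_ofReal', smul_eq_mul]


/-- the co-area formula on graphs. For a nonnegative function `u` on a finite
subset `Ω` (extended by zero), with superlevel sets `Ω_t(u) = {x ∈ Ω : u x > t}`:
`(1/2) ∑_{x,y} |u(x) - u(y)| μ_{xy} = ∫₀^∞ |∂Ω_t(u)|_μ dt` and
`∫₀^∞ |Ω_t(u)|_ν dt = ∑_{x∈Ω} u(x) ν_x`. -/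
theorem coarea_formula {V : Type*} {μ : V → V → ℝ} {ν : V → ℝ}
    (hG : IsWeightedGraph μ ν) (Ω : Finset V) (u : V → ℝ)
    (hzero : ∀ x, x ∉ Ω → u x = 0) (hnonneg : ∀ x, 0 ≤ u x) :
    ((1 / 2) * ∑ᶠ x : V, ∑ᶠ y : V, μ x y * |u x - u y| =
        ∫ t in Set.Ioi (0 : ℝ), bdryWt μ (Ω.filter fun x => t < u x)) ∧
      (∫ t in Set.Ioi (0 : ℝ), (∑ x ∈ Ω.filter (fun x => t < u x), ν x)) =
        ∑ x ∈ Ω, u x * ν x := by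
  constructor
  · -- Part 1: the boundary co-area formula
    set N : V → Finset V := fun x => (hG.locFin x).toFinset with hN
    set S : Finset V := Ω ∪ Ω.biUnion N with hS
    have hΩS : Ω ⊆ S := Finset.subset_union_left
    have hNS : ∀ x ∈ Ω, ∀ y, μ x y ≠ 0 → y ∈ S := fun x hx y hy =>
      Finset.mem_union_right _ (Finset.mem_biUnion.2 ⟨x, hx, (hG.locFin x).mem_toFinset.2 hy⟩)
    have hNS' : ∀ y ∈ Ω, ∀ x, μ x y ≠ 0 → x ∈ S := fun y hy x hxy =>
      hNS y hy x (by rw [hG.symm y x]; exact hxy)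
    -- inner finsum as a finite sum over S
    have hinner : ∀ x : V, (∑ᶠ y : V, μ x y * |u x - u y|)
        = ∑ y ∈ S, μ x y * |u x - u y| := by
      intro x
      refine finsum_eq_finset_sum_of_support_subset _ fun y hy => ?_
      have hμ : μ x y ≠ 0 := left_ne_zero_of_mul hy
      have hdu : u x ≠ u y := fun h =>
        right_ne_zero_of_mul hy (by rw [h, sub_self, abs_zero])
      by_cases hx : x ∈ Ω
      · exact hNS x hx y hμ
      · have hyΩ : y ∈ Ω := by
          by_contra hyΩ
          exact hdu (by rw [hzero x hx, hzero y hyΩ])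
        exact hΩS hyΩ
    -- outer finsum as a finite sum over S
    have houter : (∑ᶠ x : V, ∑ᶠ y : V, μ x y * |u x - u y|)
        = ∑ x ∈ S, ∑ y ∈ S, μ x y * |u x - u y| := by
      rw [finsum_eq_finset_sum_of_support_subset _ (s := S) ?_]
      · exact Finset.sum_congr rfl fun x _ => hinner x
      · intro x hx
        by_contra hxS
        have hxΩ : x ∉ Ω := fun h => hxS (hΩS h)
        apply hx
        refine finsum_eq_zero_of_forall_eq_zero fun y => ?_
        by_cases hμ : μ x y = 0
        · rw [hμ, zero_mul]
        · have hyΩ : y ∉ Ω := fun h => hxS (hNS' y h x hμ)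
          rw [hzero x hxΩ, hzero y hyΩ, sub_self, abs_zero, mul_zero]
    -- symmetrization
    have habs : ∀ a b : ℝ, |a - b| = max (a - b) 0 + max (b - a) 0 := by
      intro a b
      rw [← max_zero_add_max_neg_zero_eq_abs_self (a - b), neg_sub]
    have hswap : ∑ x ∈ S, ∑ y ∈ S, μ x y * max (u y - u x) 0
        = ∑ x ∈ S, ∑ y ∈ S, μ x y * max (u x - u y) 0 := by
      rw [Finset.sum_comm]
      exact Finset.sum_congr rfl fun x _ => Finset.sum_congr rfl fun y _ => by
        rw [hG.symm]
    have hsym : ∑ x ∈ S, ∑ y ∈ S, μ x y * |u x - u y|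
        = 2 * ∑ x ∈ S, ∑ y ∈ S, μ x y * max (u x - u y) 0 := by
      calc ∑ x ∈ S, ∑ y ∈ S, μ x y * |u x - u y|
          = ∑ x ∈ S, ∑ y ∈ S,
              (μ x y * max (u x - u y) 0 + μ x y * max (u y - u x) 0) :=
            Finset.sum_congr rfl fun x _ => Finset.sum_congr rfl fun y _ => by
              rw [habs, mul_add]
        _ = (∑ x ∈ S, ∑ y ∈ S, μ x y * max (u x - u y) 0)
              + ∑ x ∈ S, ∑ y ∈ S, μ x y * max (u y - u x) 0 := by
            simp [Finset.sum_add_distrib]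
        _ = 2 * ∑ x ∈ S, ∑ y ∈ S, μ x y * max (u x - u y) 0 := by
            rw [hswap]; ring
    -- boundary weight as a finite sum of indicators, for t > 0
    have hbd : Set.EqOn (fun t => bdryWt μ (Ω.filter fun x => t < u x))
        (fun t => ∑ x ∈ S, ∑ y ∈ S, (Set.Ico (u y) (u x)).indicator (fun _ => μ x y) t)
        (Set.Ioi (0:ℝ)) := by
      intro t ht
      have ht0 : (0:ℝ) < t := ht
      have hmemU : ∀ z, z ∈ (Ω.filter fun x => t < u x) ↔ t < u z := by
        intro z
        rw [Finset.mem_filter]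
        constructor
        · exact fun h => h.2
        · intro h
          refine ⟨?_, h⟩
          by_contra hz
          rw [hzero z hz] at h
          exact absurd (ht0.trans h) (lt_irrefl 0)
      have hinner2 : ∀ x ∈ (Ω.filter fun x => t < u x),
          (∑ᶠ y ∈ {z : V | z ∉ (Ω.filter fun x => t < u x)}, μ x y)
          = ∑ y ∈ S, (Set.Ico (u y) (u x)).indicator (fun _ => μ x y) t := by
        intro x hx
        have hxΩ : x ∈ Ω := (Finset.mem_filter.1 hx).1
        have hxU : t < u x := (hmemU x).1 hx
        rw [finsum_mem_def, finsum_eq_finset_sum_of_support_subset _ (s := S) ?_]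
        · refine Finset.sum_congr rfl fun y _ => ?_
          by_cases hy : y ∈ (Ω.filter fun x => t < u x)
          · have h1 : ¬ (u y ≤ t) := not_le.2 ((hmemU y).1 hy)
            simp only [Set.indicator_apply, Set.mem_setOf_eq, Set.mem_Ico]
            rw [if_neg (not_not.2 hy), if_neg (fun hc => h1 hc.1)]
          · have h1 : u y ≤ t := not_lt.1 (fun h => hy ((hmemU y).2 h))
            simp only [Set.indicator_apply, Set.mem_setOf_eq, Set.mem_Ico]
            rw [if_pos hy, if_pos ⟨h1, hxU⟩]
        · intro y hy
          have hμ : μ x y ≠ 0 := by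
            intro h
            apply hy
            simp [Set.indicator_apply, h]
          exact hNS x hxΩ y hμ
      show bdryWt μ (Ω.filter fun x => t < u x)
          = ∑ x ∈ S, ∑ y ∈ S, (Set.Ico (u y) (u x)).indicator (fun _ => μ x y) t
      rw [show bdryWt μ (Ω.filter fun x => t < u x)
          = ∑ x ∈ (Ω.filter fun x => t < u x),
              ∑ y ∈ S, (Set.Ico (u y) (u x)).indicator (fun _ => μ x y) t from
        Finset.sum_congr rfl hinner2]
      refine Finset.sum_subset (fun z hz => hΩS (Finset.mem_filter.1 hz).1) ?_
      intro x _ hxU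
      have hxt : ¬ t < u x := fun h => hxU ((hmemU x).2 h)
      refine Finset.sum_eq_zero fun y _ => ?_
      rw [Set.indicator_apply, if_neg]
      rw [Set.mem_Ico]
      exact fun h => hxt h.2
    -- compute the integral
    have hint : (∫ t in Set.Ioi (0:ℝ), bdryWt μ (Ω.filter fun x => t < u x))
        = ∑ x ∈ S, ∑ y ∈ S, max (u x - u y) 0 * μ x y := by
      rw [MeasureTheory.setIntegral_congr_fun measurableSet_Ioi hbd]
      rw [MeasureTheory.integral_finset_sum _ (fun x _ =>
        MeasureTheory.integrable_finset_sum _ (fun y _ => aux_integrable (u y) (u x) (μ x y)))]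
      refine Finset.sum_congr rfl fun x _ => ?_
      rw [MeasureTheory.integral_finset_sum _ (fun y _ => aux_integrable (u y) (u x) (μ x y))]
      exact Finset.sum_congr rfl fun y _ => aux_integral (u y) (u x) (μ x y) (hnonneg y)
    rw [houter, hsym, hint]
    rw [show (1:ℝ)/2 * (2 * ∑ x ∈ S, ∑ y ∈ S, μ x y * max (u x - u y) 0)
        = ∑ x ∈ S, ∑ y ∈ S, μ x y * max (u x - u y) 0 by ring]
    exact Finset.sum_congr rfl fun x _ => Finset.sum_congr rfl fun y _ => mul_comm _ _
  · -- Part 2: the volume co-area formula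
    have heq : Set.EqOn (fun t => ∑ x ∈ Ω.filter (fun x => t < u x), ν x)
        (fun t => ∑ x ∈ Ω, (Set.Ico 0 (u x)).indicator (fun _ => ν x) t)
        (Set.Ioi (0:ℝ)) := by
      intro t ht
      have ht0 : (0:ℝ) < t := ht
      simp only [Finset.sum_filter]
      refine Finset.sum_congr rfl fun x _ => ?_
      by_cases h : t < u x
      · rw [if_pos h, Set.indicator_apply, if_pos ⟨ht0.le, h⟩]
      · rw [if_neg h, Set.indicator_apply, if_neg (fun hm => h hm.2)]
    rw [MeasureTheory.setIntegral_congr_fun measurableSet_Ioi heq]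
    rw [MeasureTheory.integral_finset_sum _ (fun x _ => aux_integrable 0 (u x) (ν x))]
    refine Finset.sum_congr rfl fun x _ => ?_
    rw [aux_integral 0 (u x) (ν x) le_rfl, sub_zero, max_eq_left (hnonneg x)]

end PGraph
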